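/- Let G, H: ℝ → ℝ be strictly increasing continuous maps satisfying G(x+1/2) = G(x)+1/2 and H(x+1/2) = H(x)+1/2 for all x. Then the minimum displacements m(G) = min_x (G(x)-x) and m(H⁻¹∘G∘H) = min_x (H⁻¹(G(H(x)))-x) lie in the same closed half-unit interval: for every integer n, n/2 ≤ m(G) if and only if n/2 ≤ m(H⁻¹∘G∘H), and m(G) ≤ n/2 if and only if m(H⁻¹∘G∘H) ≤ n/2. -/

import Mathlib

private lemma shift_int (F : ℝ → ℝ) (h : ∀ x, F (x + 1/2) = F x + 1/2) :
    ∀ (n : ℤ) (x : ℝ), F (x + n/2) = F x + n/2 := by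
  intro n
  induction n using Int.induction_on with
  | zero => intro x; simp
  | succ k ih =>
      intro x
      have ihx := ih x
      have key := h (x + (k:ℝ)/2)
      have h1 : x + (k:ℝ)/2 + 1/2 = x + ((k:ℝ)+1)/2 := by ring
      rw [h1] at key
      push_cast at ihx ⊢
      linarith [key, ihx]
  | pred k ih =>
      intro x
      have ihx := ih x
      have key := h (x + ((-(k:ℝ)-1))/2)
      have h2 : x + (-(k:ℝ)-1)/2 + 1/2 = x + (-(k:ℝ))/2 := by ring
      rw [h2] at key
      push_cast at ihx ⊢
      have h3 : x + (-(k:ℝ)-1)/2 = x + (-(k:ℝ)-1)/2 := rfl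
      linarith [key, ihx]

private lemma exists_min (f : ℝ → ℝ) (hc : Continuous f) (hp : ∀ x, f (x + 1/2) = f x) :
    ∃ x0, ∀ x, f x0 ≤ f x := by
  obtain ⟨x0, _, hx0⟩ := (isCompact_Icc (a := (0:ℝ)) (b := 1/2)).exists_isMinOn
    (Set.nonempty_Icc.2 (by norm_num)) hc.continuousOn
  refine ⟨x0, fun x => ?_⟩
  have hper : Function.Periodic f (1/2) := hp
  have h1 : f x = f (x - (⌊x / (1/2)⌋ : ℤ) * (1/2)) := (hper.sub_int_mul_eq _).symm
  have hmem : x - (⌊x / (1/2)⌋ : ℤ) * (1/2) ∈ Set.Icc (0:ℝ) (1/2) := by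
    constructor
    · have := Int.floor_le (x / (1/2)); nlinarith
    · have := Int.lt_floor_add_one (x / (1/2)); nlinarith
  rw [h1]; exact hx0 hmem

/-- The minimum displacements of two conjugate lifts commuting with the half-shift
lie in the same closed half-unit interval. -/
theorem min_displacement_conj_same_half_interval (G H Hinv : ℝ → ℝ)
    (hGmono : StrictMono G) (hGcont : Continuous G)
    (hGhalf : ∀ x, G (x + 1/2) = G x + 1/2)
    (hHmono : StrictMono H) (hHcont : Continuous H)
    (hHhalf : ∀ x, H (x + 1/2) = H x + 1/2)
    (hinvL : Function.LeftInverse Hinv H) (hinvR : Function.RightInverse Hinv H) :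
    ∀ n : ℤ,
      (((n : ℝ) / 2 ≤ ⨅ x : ℝ, G x - x) ↔
        ((n : ℝ) / 2 ≤ ⨅ x : ℝ, Hinv (G (H x)) - x)) ∧
      (((⨅ x : ℝ, G x - x) ≤ (n : ℝ) / 2) ↔
        ((⨅ x : ℝ, Hinv (G (H x)) - x) ≤ (n : ℝ) / 2)) := by
  -- Hinv is strictly monotone
  have hImono : StrictMono Hinv := fun a b hab => by
    have := hHmono.lt_iff_lt (a := Hinv a) (b := Hinv b)
    rw [hinvR, hinvR] at this
    exact this.1 hab
  -- Hinv is continuous (inverse of a continuous strictly monotone surjection)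
  have hHsurj : Function.Surjective H := hinvR.surjective
  let e : ℝ ≃o ℝ := StrictMono.orderIsoOfSurjective H hHmono hHsurj
  have heH : ∀ x, e x = H x := fun x => rfl
  have hIeq : Hinv = fun x => e.symm x := by
    funext x
    apply e.injective
    rw [e.apply_symm_apply, heH, hinvR]
  have hIcont : Continuous Hinv := by rw [hIeq]; exact e.symm.continuous
  -- Hinv commutes with the half shift
  have hIhalf : ∀ x, Hinv (x + 1/2) = Hinv x + 1/2 := fun x => by
    conv_lhs => rw [← hinvR x, ← hHhalf, hinvL]
  -- integer half-shift versions
  have hHn := shift_int H hHhalf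
  have hIn := shift_int Hinv hIhalf
  -- the two displacement functions
  set f : ℝ → ℝ := fun x => G x - x with hf
  set g : ℝ → ℝ := fun x => Hinv (G (H x)) - x with hg
  have hfc : Continuous f := hGcont.sub continuous_id
  have hgc : Continuous g := ((hIcont.comp (hGcont.comp hHcont))).sub continuous_id
  have hfp : ∀ x, f (x + 1/2) = f x := fun x => by simp only [hf, hGhalf]; ring
  have hgp : ∀ x, g (x + 1/2) = g x := fun x => by
    simp only [hg, hHhalf, hGhalf, hIhalf]; ring
  obtain ⟨x0, hx0⟩ := exists_min f hfc hfp
  obtain ⟨y0, hy0⟩ := exists_min g hgc hgp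
  have hfbdd : BddBelow (Set.range f) := ⟨f x0, by rintro _ ⟨x, rfl⟩; exact hx0 x⟩
  have hgbdd : BddBelow (Set.range g) := ⟨g y0, by rintro _ ⟨x, rfl⟩; exact hy0 x⟩
  have hfinf : (⨅ x, f x) = f x0 := le_antisymm (ciInf_le hfbdd x0) (le_ciInf hx0)
  have hginf : (⨅ x, g x) = g y0 := le_antisymm (ciInf_le hgbdd y0) (le_ciInf hy0)
  intro n
  -- transfer of the two properties
  have hall : (∀ x, (n:ℝ)/2 ≤ f x) ↔ (∀ x, (n:ℝ)/2 ≤ g x) := by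
    constructor
    · intro hF x
      have h1 : H x + (n:ℝ)/2 ≤ G (H x) := by have := hF (H x); simp only [hf] at this; linarith
      have h2 : H (x + (n:ℝ)/2) ≤ G (H x) := by rw [hHn]; exact h1
      have h3 := hImono.monotone h2
      rw [hinvL] at h3
      simp only [hg]; linarith
    · intro hGg y
      have h1 : Hinv y + (n:ℝ)/2 ≤ Hinv (G (H (Hinv y))) := by
        have := hGg (Hinv y); simp only [hg] at this; linarith
      rw [hinvR] at h1
      have h2 := hHmono.monotone h1
      rw [hHn, hinvR, hinvR] at h2
      simp only [hf]; linarith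
  have hex : (∃ x, f x ≤ (n:ℝ)/2) ↔ (∃ x, g x ≤ (n:ℝ)/2) := by
    constructor
    · rintro ⟨y, hy⟩
      refine ⟨Hinv y, ?_⟩
      have h1 : G y ≤ y + (n:ℝ)/2 := by simp only [hf] at hy; linarith
      have h2 := hImono.monotone h1
      rw [hIn] at h2
      show Hinv (G (H (Hinv y))) - Hinv y ≤ (n:ℝ)/2
      rw [hinvR y]; linarith
    · rintro ⟨x, hx⟩
      refine ⟨H x, ?_⟩
      have h1 : Hinv (G (H x)) ≤ x + (n:ℝ)/2 := by simp only [hg] at hx; linarith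
      have h2 := hHmono.monotone h1
      rw [hinvR, hHn] at h2
      simp only [hf]; linarith
  constructor
  · constructor
    · intro h
      exact le_ciInf fun x => (hall.1 fun y => h.trans (ciInf_le hfbdd y)) x
    · intro h
      exact le_ciInf fun x => (hall.2 fun y => h.trans (ciInf_le hgbdd y)) x
  · constructor
    · intro h
      obtain ⟨x, hx⟩ := hex.1 ⟨x0, by rw [← hfinf]; exact h⟩
      exact (ciInf_le hgbdd x).trans hx
    · intro h
      obtain ⟨x, hx⟩ := hex.2 ⟨y0, by rw [← hginf]; exact h⟩
      exact (ciInf_le hfbdd x).trans hx
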